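/- Let N ≥ 2 and 1 ≤ k ≤ N/4 be integers, and let ω_k = N(1-1/N)^k / (N + (k+1-N)(1-1/N)^k). Then ((N - ω_k)/ω_k) / ((1-(1-1/N)^k)(N - k·ω_k)) ≤ (1/(1-1/N)^k) · (1 + (k/N)(1-1/N)^k / (1-(1-1/N)^k))^2. -/

import Mathlib

theorem gap_ratio_bound (N k : ℕ) (hN : 2 ≤ N) (hk1 : 1 ≤ k) (hkN : (k:ℝ) ≤ (N:ℝ)/4) :
    let r : ℝ := (1 - 1/(N:ℝ)) ^ k
    let ω : ℝ := (N:ℝ) * r / ((N:ℝ) + ((k:ℝ) + 1 - N) * r)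
    (((N:ℝ) - ω) / ω) / ((1 - r) * ((N:ℝ) - k * ω)) ≤
      (1 / r) * (1 + ((k:ℝ)/(N:ℝ)) * r / (1 - r)) ^ 2 := by
  intro r ω
  have hN2 : (2:ℝ) ≤ (N:ℝ) := by exact_mod_cast hN
  have hNpos : (0:ℝ) < N := by linarith
  have hk : (1:ℝ) ≤ (k:ℝ) := by exact_mod_cast hk1
  have hk0 : (0:ℝ) ≤ (k:ℝ) := by linarith
  have hbase0 : (0:ℝ) < 1 - 1/(N:ℝ) := by
    rw [sub_pos, div_lt_one hNpos]; linarith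
  have hbase1 : (1:ℝ) - 1/(N:ℝ) < 1 := by
    have : 0 < 1/(N:ℝ) := by positivity
    linarith
  have hr0 : 0 < r := pow_pos hbase0 k
  have hr1 : r < 1 := pow_lt_one₀ hbase0.le hbase1 (by omega)
  have h1r : (0:ℝ) < 1 - r := by linarith
  have hA : (0:ℝ) < (N:ℝ)*(1-r) + k*r := by nlinarith
  have hB : (0:ℝ) < (N:ℝ)*(1-r) + r := by nlinarith
  have hD : (0:ℝ) < (N:ℝ) + ((k:ℝ) + 1 - N) * r := by nlinarith
  have hω : ω = (N:ℝ) * r / ((N:ℝ) + ((k:ℝ) + 1 - N) * r) := rfl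
  clear_value r ω
  have hrne : r ≠ 0 := ne_of_gt hr0
  have h1rne : (1:ℝ) - r ≠ 0 := ne_of_gt h1r
  have hNne : (N:ℝ) ≠ 0 := ne_of_gt hNpos
  have hDne : (N:ℝ) + ((k:ℝ) + 1 - N) * r ≠ 0 := ne_of_gt hD
  have e1 : (N:ℝ) - ω = (N:ℝ) * ((N:ℝ)*(1-r) + k*r) / ((N:ℝ) + ((k:ℝ) + 1 - N) * r) := by
    rw [hω, eq_div_iff hDne, sub_mul, div_mul_cancel₀ _ hDne]; ring
  have e2 : (N:ℝ) - k*ω = (N:ℝ) * ((N:ℝ)*(1-r) + r) / ((N:ℝ) + ((k:ℝ) + 1 - N) * r) := by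
    rw [hω, eq_div_iff hDne, sub_mul, mul_div_assoc', div_mul_cancel₀ _ hDne]; ring
  have hL : (((N:ℝ) - ω) / ω) / ((1 - r) * ((N:ℝ) - k * ω)) =
      (((N:ℝ)*(1-r) + k*r) * ((N:ℝ) + ((k:ℝ) + 1 - N) * r)) /
        (r * (1-r) * N * ((N:ℝ)*(1-r) + r)) := by
    have hBne : (N:ℝ)*(1-r) + r ≠ 0 := ne_of_gt hB
    rw [e1, e2, hω]
    field_simp
  have hR : (1 / r) * (1 + ((k:ℝ)/(N:ℝ)) * r / (1 - r)) ^ 2 =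
      ((N:ℝ)*(1-r) + k*r)^2 / (r * ((1-r))^2 * N^2) := by
    field_simp
  rw [hL, hR]
  rw [div_le_div_iff₀ (by positivity) (by positivity)]
  have key : (0:ℝ) ≤ r*(1-r)*N*((N:ℝ)*(1-r) + k*r)*(k*r^2) := by positivity
  nlinarith [key]
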